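/- For all real x > 0 and integers 1 ≤ α ≤ n, (1 + nx/α)^α ≤ (1+x)^α · e^{(n−α)x/(1+x)}. -/

import Mathlib

theorem elementary_bound (x : ℝ) (hx : 0 < x) (α n : ℕ) (h1 : 1 ≤ α) (h2 : α ≤ n) :
    (1 + n * x / α) ^ α ≤ (1 + x) ^ α * Real.exp (((n : ℝ) - α) * x / (1 + x)) := by
  have hα : (0:ℝ) < α := by positivity
  have hαne : (α:ℝ) ≠ 0 := ne_of_gt hα
  have h1x : (0:ℝ) < 1 + x := by linarith
  set t : ℝ := ((n:ℝ) - α) * x / (α * (1 + x)) with ht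
  have hnα : (0:ℝ) ≤ (n:ℝ) - α := by
    have : (α:ℝ) ≤ n := Nat.cast_le.mpr h2
    linarith
  have ht0 : 0 ≤ t := by
    apply div_nonneg (by positivity) (by positivity)
  have key : 1 + n * x / α = (1 + x) * (1 + t) := by
    rw [ht]
    field_simp [ht]
    ring
  rw [key, mul_pow]
  have h1 : (1 + t) ^ α ≤ Real.exp t ^ α := by
    apply pow_le_pow_left₀ (by linarith)
    linarith [Real.add_one_le_exp t]
  have h2' : Real.exp t ^ α = Real.exp (((n : ℝ) - α) * x / (1 + x)) := by
    rw [← Real.exp_nat_mul]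
    congr 1
    rw [ht]
    field_simp [ht]
  calc (1 + x) ^ α * (1 + t) ^ α ≤ (1 + x) ^ α * Real.exp t ^ α := by
        apply mul_le_mul_of_nonneg_left h1 (by positivity)
    _ = _ := by rw [h2']
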